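/- arXiv:1809.06758 — 3 statements merged into one kernel-verified Lean document; each statement's English description precedes it below -/
import Mathlib

section
/- A Markov kernel Q on a countable state space is reversible with respect to a probability distribution π if and only if Q admits a symmetric decomposition (K, V) in which every kernel K_z is reversible with respect to π. -/
open scoped ENNReal

/-- A Markov kernel `Q` on a countable state space is reversible w.r.t. a
probability distribution `π` iff `Q` admits a symmetric decomposition `(K, V)` in which
every kernel `K z` is reversible w.r.t. `π`. -/
theorem stmt1 {X : Type*} [Countable X]
    (π : X → ℝ≥0∞) (hπ : ∑' x, π x = 1)
    (Q : X → X → ℝ≥0∞) (hQ : ∀ x, ∑' y, Q x y = 1) :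
    (∀ x y, π x * Q x y = π y * Q y x) ↔
      ∃ (Z : Type) (_ : Countable Z) (K : Z → X → X → ℝ≥0∞) (V : X → Z → ℝ≥0∞),
        (∀ z x, ∑' y, K z x y = 1) ∧
        (∀ x, ∑' z, V x z = 1) ∧
        (∀ x y, Q x y = ∑' z, V x z * K z x y) ∧
        (∀ z x y, 0 < K z x y → V x z = V y z) ∧
        (∀ z x y, π x * K z x y = π y * K z y x) := by
  constructor
  · intro hrev
    refine ⟨Unit, inferInstance, fun _ => Q, fun _ _ => 1, fun _ x => hQ x, ?_, ?_, ?_, ?_⟩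
    · intro x; rw [tsum_fintype]; simp
    · intro x y; rw [tsum_fintype]; simp
    · intro z x y _; rfl
    · intro _ x y; exact hrev x y
  · rintro ⟨Z, _, K, V, hK, hV, hdec, hsym, hKrev⟩ x y
    have h1 : π x * Q x y = ∑' z, V x z * (π x * K z x y) := by
      rw [hdec, ← ENNReal.tsum_mul_left]
      exact tsum_congr fun z => by ring
    have h2 : π y * Q y x = ∑' z, V y z * (π y * K z y x) := by
      rw [hdec, ← ENNReal.tsum_mul_left]
      exact tsum_congr fun z => by ring
    rw [h1, h2]
    refine tsum_congr fun z => ?_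
    rw [hKrev z x y]
    rcases eq_or_lt_of_le (show 0 ≤ K z y x from zero_le) with h | h
    · rw [← h]; simp
    · rw [hsym z y x h]
end

section
/- Let r ∈ ℕ^I and c ∈ ℕ^J with Σ_i r_i = Σ_j c_j, and let X be the set of I×J nonnegative integer matrices with row sums r and column sums c. For any two matrices x, y ∈ X with x ≠ y, there exist row indices i ≠ i' and column indices j ≠ j' and a nonzero integer Δ such that adding Δ to entries (i,j) and (i',j'), and subtracting Δ from entries (i,j') and (i',j), applied to x yields a matrix x'' ∈ X with Σ_{a,b} |x''_{ab} − y_{ab}| < Σ_{a,b} |x_{ab} − y_{ab}|. -/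
/-- Auxiliary: if two functions agree off `{j, j'}` (with `j ≠ j'`), their sums satisfy a
cross equation letting us compare them via the values at `j, j'` only. -/
lemma stmt14_pair_sum {n : ℕ} {j j' : Fin n} (hjj : j ≠ j') (g g' : Fin n → ℕ)
    (h : ∀ b, b ≠ j → b ≠ j' → g' b = g b) :
    ∑ b, g' b + (g j + g j') = ∑ b, g b + (g' j + g' j') := by
  have e : ∀ f : Fin n → ℕ,
      ∑ b, f b = f j + (f j' + ∑ b ∈ (Finset.univ.erase j).erase j', f b) := by
    intro f
    rw [← Finset.add_sum_erase _ f (Finset.mem_univ j),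
      ← Finset.add_sum_erase _ f (Finset.mem_erase.mpr ⟨Ne.symm hjj, Finset.mem_univ j'⟩)]
  have etail : ∑ b ∈ (Finset.univ.erase j).erase j', g' b
      = ∑ b ∈ (Finset.univ.erase j).erase j', g b := by
    refine Finset.sum_congr rfl fun b hb => ?_
    simp only [Finset.mem_erase] at hb
    exact h b hb.2.1 hb.1
  rw [e g, e g', etail]; omega

/-- Auxiliary: equal sums plus a strict pointwise drop somewhere forces a strict rise
somewhere else. -/
lemma stmt14_exists_lt {n : ℕ} (f g : Fin n → ℕ) (hsum : ∑ b, f b = ∑ b, g b)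
    {b0 : Fin n} (h : f b0 < g b0) : ∃ b, g b < f b := by
  by_contra hc
  push_neg at hc
  have : ∑ b, f b < ∑ b, g b :=
    Finset.sum_lt_sum (fun b _ => hc b) ⟨b0, Finset.mem_univ b0, h⟩
  omega

/-- Auxiliary: the signed indicator pattern sums to zero. -/
lemma stmt14_ite_sum {n : ℕ} {j j' : Fin n} (hjj : j ≠ j') :
    ∑ b, (if b = j then (1:ℤ) else if b = j' then -1 else 0) = 0 := by
  have e : ∀ b : Fin n, (if b = j then (1:ℤ) else if b = j' then -1 else 0)
      = (if b = j then (1:ℤ) else 0) + (if b = j' then -1 else 0) := by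
    intro b
    split_ifs with h1 h2 <;> first
      | exact absurd (h1.symm.trans h2) hjj
      | norm_num
  rw [Finset.sum_congr rfl fun b _ => e b, Finset.sum_add_distrib]
  simp [Finset.sum_ite_eq']

/-- Let `X` be the set of `I × J` nonnegative integer matrices with row sums
`r` and column sums `c` (with `Σ r = Σ c`). For any two distinct `x, y ∈ X` there is a
2×2 basic move (rows `i ≠ i'`, columns `j ≠ j'`, nonzero integer `Δ`, added with the
pattern `(+Δ, −Δ; −Δ, +Δ)`) taking `x` to a matrix `x'' ∈ X` strictly closer to `y` in
`L¹` distance. -/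
theorem stmt14 {I J : ℕ} (r : Fin I → ℕ) (c : Fin J → ℕ)
    (hrc : ∑ i, r i = ∑ j, c j)
    (x y : Fin I → Fin J → ℕ)
    (hxr : ∀ i, ∑ j, x i j = r i) (hxc : ∀ j, ∑ i, x i j = c j)
    (hyr : ∀ i, ∑ j, y i j = r i) (hyc : ∀ j, ∑ i, y i j = c j)
    (hne : x ≠ y) :
    ∃ (i i' : Fin I) (j j' : Fin J) (Δ : ℤ) (x'' : Fin I → Fin J → ℕ),
      i ≠ i' ∧ j ≠ j' ∧ Δ ≠ 0 ∧
      (∀ a b, (x'' a b : ℤ) = (x a b : ℤ) +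
        Δ * ((if a = i then 1 else if a = i' then -1 else 0) *
             (if b = j then 1 else if b = j' then -1 else 0))) ∧
      (∀ a, ∑ b, x'' a b = r a) ∧ (∀ b, ∑ a, x'' a b = c b) ∧
      (∑ a, ∑ b, ((x'' a b : ℤ) - (y a b : ℤ)).natAbs)
        < ∑ a, ∑ b, ((x a b : ℤ) - (y a b : ℤ)).natAbs := by
  -- find a cell where x and y differ
  obtain ⟨i, j0, hij0⟩ : ∃ i j0, x i j0 ≠ y i j0 := by
    by_contra h
    push_neg at h
    exact hne (funext fun i => funext fun j => h i j)
  have hrowsum : ∑ b, x i b = ∑ b, y i b := by rw [hxr, hyr]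
  -- find j with x i j > y i j and j' with x i j' < y i j'
  obtain ⟨j, j', hxgt, hxlt⟩ :
      ∃ j j', y i j < x i j ∧ x i j' < y i j' := by
    rcases lt_or_gt_of_ne hij0 with h | h
    · obtain ⟨j, hj⟩ := stmt14_exists_lt (fun b => x i b) (fun b => y i b) hrowsum h
      exact ⟨j, j0, hj, h⟩
    · obtain ⟨j', hj'⟩ := stmt14_exists_lt (fun b => y i b) (fun b => x i b) hrowsum.symm h
      exact ⟨j0, j', h, hj'⟩
  have hjj : j ≠ j' := by rintro rfl; omega
  -- find i' with x i' j' > y i' j' in column j'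
  have hcolsum : ∑ a, x a j' = ∑ a, y a j' := by rw [hxc, hyc]
  obtain ⟨i', hi'⟩ := stmt14_exists_lt (fun a => x a j') (fun a => y a j') hcolsum hxlt
  have hii : i ≠ i' := by rintro rfl; omega
  -- the new matrix
  set x'' : Fin I → Fin J → ℕ := fun a b =>
    if a = i then (if b = j then x a b - 1 else if b = j' then x a b + 1 else x a b)
    else if a = i' then (if b = j then x a b + 1 else if b = j' then x a b - 1 else x a b)
    else x a b with hx''
  have h'' : ∀ a b, (x'' a b : ℤ) = (x a b : ℤ) +
      (-1 : ℤ) * ((if a = i then 1 else if a = i' then -1 else 0) *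
           (if b = j then 1 else if b = j' then -1 else 0)) := by
    intro a b
    simp only [hx'']
    split_ifs <;> subst_vars <;> push_cast <;> omega
  refine ⟨i, i', j, j', -1, x'', hii, hjj, by norm_num, h'', ?_, ?_, ?_⟩
  · -- row sums
    intro a
    have : ((∑ b, x'' a b : ℕ) : ℤ) = ((r a : ℕ) : ℤ) := by
      push_cast
      calc ∑ b, (x'' a b : ℤ)
          = ∑ b, ((x a b : ℤ) +
            (-1 : ℤ) * ((if a = i then 1 else if a = i' then -1 else 0) *
              (if b = j then 1 else if b = j' then -1 else 0))) :=
            Finset.sum_congr rfl fun b _ => h'' a b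
        _ = (∑ b, (x a b : ℤ)) +
            (-1 : ℤ) * ((if a = i then 1 else if a = i' then -1 else 0) *
              ∑ b, (if b = j then (1:ℤ) else if b = j' then -1 else 0)) := by
            rw [Finset.sum_add_distrib, ← Finset.mul_sum, ← Finset.mul_sum]
        _ = ∑ b, (x a b : ℤ) := by
            rw [stmt14_ite_sum hjj]; ring
        _ = ((r a : ℕ) : ℤ) := by rw [← hxr a]; push_cast; ring
    exact_mod_cast this
  · -- column sums
    intro b
    have : ((∑ a, x'' a b : ℕ) : ℤ) = ((c b : ℕ) : ℤ) := by
      push_cast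
      calc ∑ a, (x'' a b : ℤ)
          = ∑ a, ((x a b : ℤ) +
            (-1 : ℤ) * ((if a = i then 1 else if a = i' then -1 else 0) *
              (if b = j then 1 else if b = j' then -1 else 0))) :=
            Finset.sum_congr rfl fun a _ => h'' a b
        _ = (∑ a, (x a b : ℤ)) +
            (-1 : ℤ) * ((∑ a, (if a = i then (1:ℤ) else if a = i' then -1 else 0)) *
              (if b = j then 1 else if b = j' then -1 else 0)) := by
            rw [Finset.sum_add_distrib, ← Finset.mul_sum, ← Finset.sum_mul]
        _ = ∑ a, (x a b : ℤ) := by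
            rw [stmt14_ite_sum hii]; ring
        _ = ((c b : ℕ) : ℤ) := by rw [← hxc b]; push_cast; ring
    exact_mod_cast this
  · -- strict L¹ decrease
    -- values at the four corners
    have e1 : (x'' i j : ℤ) = (x i j : ℤ) - 1 := by
      have := h'' i j; rw [if_pos rfl, if_pos rfl] at this; omega
    have e2 : (x'' i j' : ℤ) = (x i j' : ℤ) + 1 := by
      have := h'' i j'
      rw [if_pos rfl, if_neg (Ne.symm hjj), if_pos rfl] at this; omega
    have e3 : (x'' i' j : ℤ) = (x i' j : ℤ) + 1 := by
      have := h'' i' j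
      rw [if_neg (Ne.symm hii), if_pos rfl, if_pos rfl] at this; omega
    have e4 : (x'' i' j' : ℤ) = (x i' j' : ℤ) - 1 := by
      have := h'' i' j'
      rw [if_neg (Ne.symm hii), if_pos rfl, if_neg (Ne.symm hjj), if_pos rfl] at this
      omega
    set F : Fin I → ℕ := fun a => ∑ b, ((x a b : ℤ) - (y a b : ℤ)).natAbs with hF
    set F'' : Fin I → ℕ := fun a => ∑ b, ((x'' a b : ℤ) - (y a b : ℤ)).natAbs with hF''
    have houter : ∑ a, F'' a + (F i + F i') = ∑ a, F a + (F'' i + F'' i') := by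
      refine stmt14_pair_sum hii F F'' fun a ha ha' => ?_
      refine Finset.sum_congr rfl fun b _ => ?_
      have := h'' a b
      rw [if_neg ha, if_neg ha', zero_mul, mul_zero, add_zero] at this
      omega
    have hrow : ∀ a, (∀ b, b ≠ j → b ≠ j' → ((x'' a b : ℤ) - y a b).natAbs
        = ((x a b : ℤ) - y a b).natAbs) →
        F'' a + (((x a j : ℤ) - y a j).natAbs + ((x a j' : ℤ) - y a j').natAbs)
          = F a + (((x'' a j : ℤ) - y a j).natAbs + ((x'' a j' : ℤ) - y a j').natAbs) :=
      fun a h => stmt14_pair_sum hjj (fun b => ((x a b : ℤ) - y a b).natAbs)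
        (fun b => ((x'' a b : ℤ) - y a b).natAbs) h
    have hoff : ∀ a b, b ≠ j → b ≠ j' → ((x'' a b : ℤ) - y a b).natAbs
        = ((x a b : ℤ) - y a b).natAbs := by
      intro a b hb hb'
      have := h'' a b
      rw [if_neg hb, if_neg hb', mul_zero, mul_zero, add_zero] at this
      omega
    have hi1 := hrow i (fun b hb hb' => hoff i b hb hb')
    have hi2 := hrow i' (fun b hb hb' => hoff i' b hb hb')
    -- combine everything
    have key : F'' i + F'' i' + 2 ≤ F i + F i' := by omega
    show ∑ a, F'' a < ∑ a, F a
    omega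
end

section
/- Let x be an I×J nonnegative integer matrix and fix rows i ≠ i' and columns j ≠ j'. The set of integers Δ for which adding the pattern (+Δ, −Δ; −Δ, +Δ) to the 2×2 submatrix at (i,i')×(j,j') keeps all entries nonnegative is exactly the integer interval [−min(x_{ij}, x_{i'j'}), min(x_{ij'}, x_{i'j})], and sampling Δ uniformly from this interval defines a Markov kernel on the set of matrices with given margins that satisfies detailed balance with respect to the uniform distribution. -/
/-- `applyMove i i' j j' x y Δ` says `y` is obtained from `x` by adding the 2×2 pattern
`(+Δ, −Δ; −Δ, +Δ)` on rows `i, i'` and columns `j, j'`. -/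
def applyMove {I J : ℕ} (i i' : Fin I) (j j' : Fin J)
    (x y : Fin I → Fin J → ℕ) (Δ : ℤ) : Prop :=
  ∀ a b, (y a b : ℤ) = (x a b : ℤ) +
    Δ * ((if a = i then 1 else if a = i' then -1 else 0) *
         (if b = j then 1 else if b = j' then -1 else 0))

open Classical in
/-- The switch kernel: from `x`, sample `Δ` uniformly from the admissible integer interval
`[−min(x_{ij}, x_{i'j'}), min(x_{ij'}, x_{i'j})]` and apply the 2×2 move. -/
noncomputable def switchKer {I J : ℕ} (i i' : Fin I) (j j' : Fin J)
    (x y : Fin I → Fin J → ℕ) : ℝ :=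
  if ∃ Δ : ℤ, Δ ∈ Set.Icc (-(min (x i j) (x i' j') : ℤ)) ((min (x i j') (x i' j) : ℤ)) ∧
      applyMove i i' j j' x y Δ
  then 1 / ((min (x i j) (x i' j') : ℝ) + (min (x i j') (x i' j) : ℝ) + 1)
  else 0

/-- The set of integers `Δ` for which the 2×2 pattern `(+Δ, −Δ; −Δ, +Δ)` at
rows `i ≠ i'` and columns `j ≠ j'` keeps all entries of `x` nonnegative is exactly the
integer interval `[−min(x_{ij}, x_{i'j'}), min(x_{ij'}, x_{i'j})]`, and sampling `Δ`
uniformly from this interval defines a Markov kernel on the matrices with the given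
margins which satisfies detailed balance w.r.t. the uniform distribution. -/
theorem stmt15 {I J : ℕ} (i i' : Fin I) (j j' : Fin J)
    (hi : i ≠ i') (hj : j ≠ j')
    (r : Fin I → ℕ) (c : Fin J → ℕ) :
    (∀ x : Fin I → Fin J → ℕ,
      {Δ : ℤ | 0 ≤ (x i j : ℤ) + Δ ∧ 0 ≤ (x i' j' : ℤ) + Δ ∧
               0 ≤ (x i j' : ℤ) - Δ ∧ 0 ≤ (x i' j : ℤ) - Δ}
        = Set.Icc (-(min (x i j) (x i' j') : ℤ)) ((min (x i j') (x i' j) : ℤ))) ∧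
    (∀ x y : Fin I → Fin J → ℕ,
      (∀ a, ∑ b, x a b = r a) → (∀ b, ∑ a, x a b = c b) →
      (∀ a, ∑ b, y a b = r a) → (∀ b, ∑ a, y a b = c b) →
      switchKer i i' j j' x y = switchKer i i' j j' y x) := by
  constructor
  · intro x
    ext Δ
    simp only [Set.mem_setOf_eq, Set.mem_Icc, Nat.cast_min]
    omega
  · intro x y _ _ _ _
    have key : ∀ u v : Fin I → Fin J → ℕ, ∀ Δ : ℤ, applyMove i i' j j' u v Δ →
        (v i j : ℤ) = u i j + Δ ∧ (v i' j' : ℤ) = u i' j' + Δ ∧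
        (v i j' : ℤ) = u i j' - Δ ∧ (v i' j : ℤ) = u i' j - Δ := by
      intro u v Δ h
      have h1 := h i j
      have h2 := h i' j'
      have h3 := h i j'
      have h4 := h i' j
      simp [hi, hi.symm, hj, hj.symm] at h1 h2 h3 h4
      refine ⟨by linarith, by linarith, by linarith, by linarith⟩
    have symm : ∀ u v : Fin I → Fin J → ℕ, ∀ Δ : ℤ, applyMove i i' j j' u v Δ →
        applyMove i i' j j' v u (-Δ) := by
      intro u v Δ h a b
      have := h a b
      linarith
    unfold switchKer
    by_cases hc : ∃ Δ : ℤ, Δ ∈ Set.Icc (-(min (x i j) (x i' j') : ℤ))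
        ((min (x i j') (x i' j) : ℤ)) ∧ applyMove i i' j j' x y Δ
    · obtain ⟨Δ, hΔ, hmv⟩ := hc
      obtain ⟨k1, k2, k3, k4⟩ := key x y Δ hmv
      have hc' : ∃ Δ' : ℤ, Δ' ∈ Set.Icc (-(min (y i j) (y i' j') : ℤ))
          ((min (y i j') (y i' j) : ℤ)) ∧ applyMove i i' j j' y x Δ' := by
        refine ⟨-Δ, ?_, symm x y Δ hmv⟩
        simp only [Set.mem_Icc, Nat.cast_min]
        omega
      rw [if_pos ⟨Δ, hΔ, hmv⟩, if_pos hc']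
      have hsum : (min (y i j) (y i' j') : ℤ) + (min (y i j') (y i' j) : ℤ)
          = (min (x i j) (x i' j') : ℤ) + (min (x i j') (x i' j) : ℤ) := by
        omega
      have hsumR : (min (y i j) (y i' j') : ℝ) + (min (y i j') (y i' j) : ℝ)
          = (min (x i j) (x i' j') : ℝ) + (min (x i j') (x i' j) : ℝ) := by
        exact_mod_cast hsum
      rw [← hsumR]
    · have hc' : ¬ ∃ Δ' : ℤ, Δ' ∈ Set.Icc (-(min (y i j) (y i' j') : ℤ))
          ((min (y i j') (y i' j) : ℤ)) ∧ applyMove i i' j j' y x Δ' := by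
        rintro ⟨Δ', _, hmv⟩
        obtain ⟨k1, k2, k3, k4⟩ := key y x Δ' hmv
        exact hc ⟨-Δ', by simp only [Set.mem_Icc, Nat.cast_min]; omega, symm y x Δ' hmv⟩
      rw [if_neg hc, if_neg hc']
end
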